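/- Let 𝔾 be a directed graph on n+m vertices and let R be a set of m distinct vertices. Then 𝔾 has a spanning subgraph which is a disjoint union of m cactus graphs rooted at the m vertices of R if and only if 𝔾 has a spanning forest rooted at the vertices of R and 𝔾 has a spanning subgraph which is a disjoint union of m directed path graphs and a non-negative number of directed cycle graphs, in which the m source vertices of the path graphs are exactly the vertices of R. -/

import Mathlib

open Matrix BigOperators

namespace StructCtrl

/-- A general linearly parameterized `n1 × n2` matrix `M(p) = ∑ k, p k • (g k * h k)`,
with columns `g k` and rows `h k`. -/
noncomputable def paramMat {q n1 n2 : ℕ} (g : Fin q → Fin n1 → ℝ) (h : Fin q → Fin n2 → ℝ)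
    (p : Fin q → ℝ) : Matrix (Fin n1) (Fin n2) ℝ :=
  Matrix.of fun i j => ∑ k : Fin q, p k * (g k i * h k j)

/-- Generic rank: the maximum over `p ∈ ℝ^q` of the rank of `M(p)`. -/
noncomputable def genericRank {q n1 n2 : ℕ} (g : Fin q → Fin n1 → ℝ)
    (h : Fin q → Fin n2 → ℝ) : ℕ :=
  ⨆ p : Fin q → ℝ, (paramMat g h p).rank

/-- `A(p)`: the `n × n` matrix of the first `n` columns of `[A(p) B(p)]`. -/
noncomputable def Amat {n m q : ℕ} (g : Fin q → Fin n → ℝ) (h : Fin q → Fin (n + m) → ℝ)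
    (p : Fin q → ℝ) : Matrix (Fin n) (Fin n) ℝ :=
  Matrix.of fun i j => paramMat g h p i (Fin.castAdd m j)

/-- `B(p)`: the `n × m` matrix of the last `m` columns of `[A(p) B(p)]`. -/
noncomputable def Bmat {n m q : ℕ} (g : Fin q → Fin n → ℝ) (h : Fin q → Fin (n + m) → ℝ)
    (p : Fin q → ℝ) : Matrix (Fin n) (Fin m) ℝ :=
  Matrix.of fun i j => paramMat g h p i (Fin.natAdd n j)

/-- Controllability matrix `[B  AB  …  A^{n-1}B]` (columns indexed by `Fin n × Fin m`). -/
noncomputable def ctrbMat {n m : ℕ} (A : Matrix (Fin n) (Fin n) ℝ)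
    (B : Matrix (Fin n) (Fin m) ℝ) : Matrix (Fin n) (Fin n × Fin m) ℝ :=
  Matrix.of fun i kj => (A ^ (kj.1 : ℕ) * B) i kj.2

/-- `(A, B)` is structurally controllable: for some parameter value the controllability
matrix has full rank `n`. -/
def StructurallyControllable {n m q : ℕ} (g : Fin q → Fin n → ℝ)
    (h : Fin q → Fin (n + m) → ℝ) : Prop :=
  ∃ p : Fin q → ℝ, (ctrbMat (Amat g h p) (Bmat g h p)).rank = n

/-- The binary assumption: all entries of every `g k` and every `h k` are `0` or `1`. -/
def BinaryAssumption {n m q : ℕ} (g : Fin q → Fin n → ℝ)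
    (h : Fin q → Fin (n + m) → ℝ) : Prop :=
  (∀ k i, g k i = 0 ∨ g k i = 1) ∧ (∀ k j, h k j = 0 ∨ h k j = 1)

/-- The unitary assumption: every `g k` and every `h k` is a standard unit vector, and the
pairs `(g k, h k)` are pairwise distinct. -/
def UnitaryAssumption {n m q : ℕ} (g : Fin q → Fin n → ℝ)
    (h : Fin q → Fin (n + m) → ℝ) : Prop :=
  (∀ k, ∃ i : Fin n, g k = Pi.single i 1) ∧
  (∀ k, ∃ j : Fin (n + m), h k = Pi.single j 1) ∧
  (∀ k k', k ≠ k' → (g k, h k) ≠ (g k', h k'))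

/-- `(A, B)` is reducible: some simultaneous permutation of the states puts the pair,
for all parameter values, in block-triangular form with a zero top-right `n1 × (n - n1)`
block of `A` and a zero top `n1 × m` block of `B`, where `1 ≤ n1 < n`. -/
def Reducible {n m q : ℕ} (g : Fin q → Fin n → ℝ) (h : Fin q → Fin (n + m) → ℝ) : Prop :=
  ∃ (σ : Equiv.Perm (Fin n)) (n1 : ℕ), 1 ≤ n1 ∧ n1 < n ∧ ∀ p : Fin q → ℝ,
    (∀ i j : Fin n, (i : ℕ) < n1 → n1 ≤ (j : ℕ) → Amat g h p (σ i) (σ j) = 0) ∧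
    (∀ i : Fin n, (i : ℕ) < n1 → ∀ jb : Fin m, Bmat g h p (σ i) jb = 0)

/-- `(A, B)` is irreducible. -/
def PairIrreducible {n m q : ℕ} (g : Fin q → Fin n → ℝ)
    (h : Fin q → Fin (n + m) → ℝ) : Prop :=
  ¬ Reducible g h

/-- Arc (of any color) of the graph `𝔾` of `(A, B)` from vertex `a` to vertex `b`:
`b` is a row-vertex `i` (one of the first `n` vertices) and the `(i, a)` entry of some
`g k * h k` is nonzero. -/
def HasArc {n m q : ℕ} (g : Fin q → Fin n → ℝ) (h : Fin q → Fin (n + m) → ℝ)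
    (a b : Fin (n + m)) : Prop :=
  ∃ (k : Fin q) (i : Fin n), b = Fin.castAdd m i ∧ g k i * h k a ≠ 0

/-- `𝔾` has a spanning forest rooted at the `m` input vertices `n+1, …, n+m`: every other
vertex is reachable from some input vertex by a directed path. -/
def HasSpanningForestAtInputs {n m q : ℕ} (g : Fin q → Fin n → ℝ)
    (h : Fin q → Fin (n + m) → ℝ) : Prop :=
  ∀ v : Fin (n + m), (¬ ∃ j : Fin m, Fin.natAdd n j = v) →
    ∃ j : Fin m, Relation.ReflTransGen (HasArc g h) (Fin.natAdd n j) v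

/-- A multi-colored subgraph of `𝔾`, encoded by the data of its `n` arcs: each of the
vertices `1, …, n` is the head of exactly one arc, with tail `t i` and color `c i`.
Injectivity of `t` and of `c` says no two arcs share a start vertex or a color (no two
share an end vertex by construction); such a spanning subgraph is exactly a disjoint union
of `m` directed path graphs (whose sources are the `m` input vertices) and directed cycle
graphs, with all arc colors distinct. -/
def IsMCS {n m q : ℕ} (g : Fin q → Fin n → ℝ) (h : Fin q → Fin (n + m) → ℝ)
    (t : Fin n → Fin (n + m)) (c : Fin n → Fin q) : Prop :=
  Function.Injective t ∧ Function.Injective c ∧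
    ∀ i : Fin n, g (c i) i * h (c i) (t i) ≠ 0

/-- A pure sink of the multi-colored subgraph with tail map `t`: a sink that is not a
source (i.e. has no outgoing arc, and is one of the first `n` vertices). -/
def IsPureSink {n m : ℕ} (t : Fin n → Fin (n + m)) (v : Fin (n + m)) : Prop :=
  (¬ ∃ i : Fin n, t i = v) ∧ ∃ i : Fin n, Fin.castAdd m i = v

/-- A pure source: a source (one of the last `m` vertices) that is not a sink. -/
def IsPureSource {n m : ℕ} (t : Fin n → Fin (n + m)) (v : Fin (n + m)) : Prop :=
  (∃ i : Fin n, t i = v) ∧ ∃ j : Fin m, Fin.natAdd n j = v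

/-- A matrimonial partition, encoded by a permutation `μ` that matches each pure sink with
a distinct pure source (the two-element cells are the pairs `{v, μ v}` for `v` a pure sink;
all other vertices lie in singleton cells). -/
def IsMatrimonial {n m : ℕ} (t : Fin n → Fin (n + m)) (μ : Equiv.Perm (Fin (n + m))) : Prop :=
  ∀ v, IsPureSink t v ↔ IsPureSource t (μ v)

/-- The successor map of the quotient of a multi-colored subgraph by a matrimonial
partition: each vertex with an outgoing arc is sent to the head of that arc, each pure
sink is welded to (sent to) its paired pure source, and isolated vertices stay put. -/
noncomputable def weldMap {n m : ℕ} (t : Fin n → Fin (n + m))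
    (μ : Equiv.Perm (Fin (n + m))) (v : Fin (n + m)) : Fin (n + m) :=
  if hv : ∃ i : Fin n, t i = v then Fin.castAdd m hv.choose
  else if ∃ i : Fin n, Fin.castAdd m i = v then μ v else v

/-- Number of orbits of a self-map of `Fin N`. -/
noncomputable def orbitCount {N : ℕ} (f : Fin N → Fin N) : ℕ :=
  (Set.range fun v => {w | ∃ a b : ℕ, f^[a] v = f^[b] w}).ncard

/-- Number of isolated vertices of a multi-colored subgraph (vertices that are both a
source and a sink). -/
noncomputable def isolatedCount {n m : ℕ} (t : Fin n → Fin (n + m)) : ℕ :=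
  {v : Fin (n + m) | (¬ ∃ i : Fin n, t i = v) ∧ ∃ j : Fin m, Fin.natAdd n j = v}.ncard

/-- The number of directed cycle graphs in the quotient of a multi-colored subgraph by a
matrimonial partition: every orbit of the weld map, except the (singleton) orbits of the
isolated vertices, yields exactly one cycle graph of the quotient. -/
noncomputable def quotCycleCount {n m : ℕ} (t : Fin n → Fin (n + m))
    (μ : Equiv.Perm (Fin (n + m))) : ℕ :=
  orbitCount (weldMap t μ) - isolatedCount t

/-- `𝔾` has an unbalanced similarity class of multi-colored subgraphs: for some
multi-colored subgraph `(t, c)` and some matrimonial partition `μ` for its class, the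
numbers of odd and of even multi-colored subgraphs in its similarity class (same sink set,
i.e. same `Set.range t`, and same color set `Set.range c`) differ. -/
def HasUnbalancedClass {n m q : ℕ} (g : Fin q → Fin n → ℝ)
    (h : Fin q → Fin (n + m) → ℝ) : Prop :=
  ∃ (t : Fin n → Fin (n + m)) (c : Fin n → Fin q) (μ : Equiv.Perm (Fin (n + m))),
    IsMCS g h t c ∧ IsMatrimonial t μ ∧
    {tc : (Fin n → Fin (n + m)) × (Fin n → Fin q) |
        IsMCS g h tc.1 tc.2 ∧ Set.range tc.1 = Set.range t ∧
        Set.range tc.2 = Set.range c ∧ Odd (quotCycleCount tc.1 μ)}.ncard ≠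
      {tc : (Fin n → Fin (n + m)) × (Fin n → Fin q) |
        IsMCS g h tc.1 tc.2 ∧ Set.range tc.1 = Set.range t ∧
        Set.range tc.2 = Set.range c ∧ Even (quotCycleCount tc.1 μ)}.ncard

/-- Arc set of the directed path graph whose vertices, in order, are the list `l`. -/
def pathArcs {V : Type*} (l : List V) : Set (V × V) :=
  {a | ∃ k : ℕ, l[k]? = some a.1 ∧ l[k + 1]? = some a.2}

/-- Arc set of the directed cycle graph whose vertices, in cyclic order, are the list `l`. -/
def cycleArcs {V : Type*} (l : List V) : Set (V × V) :=
  pathArcs l ∪ {a | ∃ x y, l.getLast? = some x ∧ l.head? = some y ∧ a = (x, y)}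

/-- A cactus graph with vertex set `W`, arc set `E` and root `r`: a trunk (a directed path
graph, possibly a single vertex, starting at `r`) together with any number of buds, each
bud being a directed cycle graph together with a stem arc from a vertex already in the
graph (on the trunk or on the cycle of another bud) to a vertex of the cycle. -/
inductive IsCactus {V : Type*} : Set V → Set (V × V) → V → Prop where
  | trunk (r : V) (l : List V) (hnd : l.Nodup) (hhead : l.head? = some r) :
      IsCactus {v | v ∈ l} (pathArcs l) r
  | bud (r : V) (W : Set V) (E : Set (V × V)) (l : List V) (w u : V)
      (hc : IsCactus W E r) (hnd : l.Nodup) (hne : l ≠ [])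
      (hdisj : ∀ v ∈ l, v ∉ W) (hw : w ∈ W) (hu : u ∈ l) :
      IsCactus (W ∪ {v | v ∈ l}) (E ∪ cycleArcs l ∪ {(w, u)}) r

/-- `𝔾` has a spanning subgraph which is a disjoint union of `m` cactus graphs rooted at
the `m` input vertices `n+1, …, n+m`, respectively. -/
def HasSpanningCacti {n m q : ℕ} (g : Fin q → Fin n → ℝ)
    (h : Fin q → Fin (n + m) → ℝ) : Prop :=
  ∃ (W : Fin m → Set (Fin (n + m))) (F : Fin m → Set (Fin (n + m) × Fin (n + m))),
    (∀ j, IsCactus (W j) (F j) (Fin.natAdd n j)) ∧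
    (∀ j, ∀ a ∈ F j, HasArc g h a.1 a.2) ∧
    Pairwise (fun j j' => Disjoint (W j) (W j')) ∧
    (⋃ j, W j) = Set.univ

/-- Rank of the submatrix `G_S` whose columns are the `g i`, `i ∈ S`. -/
noncomputable def rankCols {q n1 : ℕ} (g : Fin q → Fin n1 → ℝ) (S : Finset (Fin q)) : ℕ :=
  (Matrix.of fun (i : Fin n1) (k : {x // x ∈ S}) => g k.1 i).rank

/-- Rank of the submatrix `H_S` whose rows are the `h i`, `i ∈ S`. -/
noncomputable def rankRows {q n2 : ℕ} (h : Fin q → Fin n2 → ℝ) (S : Finset (Fin q)) : ℕ :=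
  (Matrix.of fun (k : {x // x ∈ S}) (j : Fin n2) => h k.1 j).rank

/-- `I` is a jointly independent index set of `(G, H)`: both `{g i : i ∈ I}` and
`{h i : i ∈ I}` are linearly independent families. -/
def JointlyIndependent {q n1 n2 : ℕ} (g : Fin q → Fin n1 → ℝ) (h : Fin q → Fin n2 → ℝ)
    (I : Finset (Fin q)) : Prop :=
  LinearIndependent ℝ (fun i : {x // x ∈ I} => g i.1) ∧
  LinearIndependent ℝ (fun i : {x // x ∈ I} => h i.1)

/-- Maximum cardinality of a nonempty jointly independent index set of `(G, H)`,
taken to be `0` if none exists. -/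
noncomputable def maxJointIndep {q n1 n2 : ℕ} (g : Fin q → Fin n1 → ℝ)
    (h : Fin q → Fin n2 → ℝ) : ℕ :=
  sSup (insert 0 {c : ℕ | ∃ I : Finset (Fin q), I.Nonempty ∧
    JointlyIndependent g h I ∧ I.card = c})

/-- Arcs of the transfer graph of `{G_𝐪, H_𝐪}`; vertex `0` is `none`, vertex `i ∈ 𝐪`
is `some i`.  There is an arc from `0` to `i` iff `h_{i2} ≠ 0`, and an arc from `j` to `i`
iff the scalar `h_{i1} g_j` is nonzero. -/
def TArc {n m q : ℕ} (g : Fin q → Fin n → ℝ) (h : Fin q → Fin (n + m) → ℝ) :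
    Option (Fin q) → Option (Fin q) → Prop
  | none, some i => ∃ j : Fin m, h i (Fin.natAdd n j) ≠ 0
  | some j, some i => (∑ l : Fin n, h i (Fin.castAdd m l) * g j l) ≠ 0
  | _, none => False

/-- The transfer graph has a spanning tree rooted at vertex `0`: every vertex `1, …, q`
is reachable from vertex `0` by a directed path. -/
def TransferRootedAtZero {n m q : ℕ} (g : Fin q → Fin n → ℝ)
    (h : Fin q → Fin (n + m) → ℝ) : Prop :=
  ∀ i : Fin q, Relation.ReflTransGen (TArc g h) none (some i)


section ListLemmas

variable {V : Type*}

lemma pathArcs_mem_left {l : List V} {a b : V} (h : (a, b) ∈ pathArcs l) : a ∈ l := by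
  obtain ⟨k, h1, _⟩ := h
  exact List.mem_of_getElem? h1

lemma pathArcs_mem_right {l : List V} {a b : V} (h : (a, b) ∈ pathArcs l) : b ∈ l := by
  obtain ⟨k, _, h2⟩ := h
  exact List.mem_of_getElem? h2

lemma cycleArcs_mem_left {l : List V} {a b : V} (h : (a, b) ∈ cycleArcs l) : a ∈ l := by
  rcases h with h | ⟨x, y, hx, hy, hxy⟩
  · exact pathArcs_mem_left h
  · cases hxy
    exact List.mem_of_getLast? hx

lemma pathArcs_arc {l : List V} {k : ℕ} (hk : k + 1 < l.length) :
    (l[k], l[k+1]) ∈ pathArcs l :=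
  ⟨k, List.getElem?_eq_getElem (by omega), List.getElem?_eq_getElem hk⟩

/-- In-arc existence on a path: every non-head member has an in-arc. -/
lemma pathArcs_in {l : List V} {v : V} (hv : v ∈ l) (hne : l.head? ≠ some v) :
    ∃ u, (u, v) ∈ pathArcs l := by
  obtain ⟨k, hk, hkv⟩ := List.getElem_of_mem hv
  cases k with
  | zero =>
    exfalso
    apply hne
    rw [List.head?_eq_getElem?, List.getElem?_eq_getElem hk, hkv]
  | succ k' =>
    exact ⟨l[k'], ⟨k', List.getElem?_eq_getElem (by omega),
      by rw [List.getElem?_eq_getElem hk, hkv]⟩⟩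

/-- Out-uniqueness on a nodup path. -/
lemma pathArcs_out_unique {l : List V} (hnd : l.Nodup) {u v v' : V}
    (h : (u, v) ∈ pathArcs l) (h' : (u, v') ∈ pathArcs l) : v = v' := by
  obtain ⟨k, h1, h2⟩ := h
  obtain ⟨k', h1', h2'⟩ := h'
  have hk : k < l.length := by
    by_contra hc
    rw [List.getElem?_eq_none (by omega)] at h1; exact absurd h1 (by simp)
  have hk' : k' < l.length := by
    by_contra hc
    rw [List.getElem?_eq_none (by omega)] at h1'; exact absurd h1' (by simp)
  rw [List.getElem?_eq_getElem hk] at h1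
  rw [List.getElem?_eq_getElem hk'] at h1'
  have : k = k' := by
    apply List.Nodup.getElem_inj_iff hnd |>.mp
    rw [Option.some_inj.mp h1, Option.some_inj.mp h1']
  subst this
  rw [h2] at h2'
  exact Option.some_inj.mp h2'

/-- In-arc existence on a nonempty cycle: every member has an in-arc with tail in `l`. -/
lemma cycleArcs_in {l : List V} (hne : l ≠ []) {v : V} (hv : v ∈ l) :
    ∃ u ∈ l, (u, v) ∈ cycleArcs l := by
  obtain ⟨k, hk, hkv⟩ := List.getElem_of_mem hv
  cases k with
  | zero =>
    refine ⟨l.getLast hne, List.getLast_mem hne, Or.inr ⟨l.getLast hne, v, ?_, ?_, rfl⟩⟩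
    · exact List.getLast?_eq_getLast hne
    · rw [List.head?_eq_getElem?, List.getElem?_eq_getElem hk, hkv]
  | succ k' =>
    exact ⟨l[k'], List.getElem_mem _, Or.inl ⟨k', List.getElem?_eq_getElem (by omega),
      by rw [List.getElem?_eq_getElem hk, hkv]⟩⟩

/-- Out-uniqueness on a nodup cycle. -/
lemma cycleArcs_out_unique {l : List V} (hnd : l.Nodup) {u v v' : V}
    (h : (u, v) ∈ cycleArcs l) (h' : (u, v') ∈ cycleArcs l) : v = v' := by
  have hlast : ∀ {w w' : V}, (w, w') ∈ pathArcs l → l.getLast? = some w → False := by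
    intro w w' hp hl
    obtain ⟨k, h1, h2⟩ := hp
    have hk1 : k + 1 < l.length := by
      by_contra hc
      rw [List.getElem?_eq_none (by omega)] at h2; exact absurd h2 (by simp)
    have hk : k < l.length := by omega
    rw [List.getElem?_eq_getElem hk] at h1
    rw [List.getLast?_eq_getElem?, List.getElem?_eq_getElem (by omega : l.length - 1 < l.length)]
      at hl
    have : k = l.length - 1 := by
      apply List.Nodup.getElem_inj_iff hnd |>.mp
      rw [Option.some_inj.mp h1, Option.some_inj.mp hl]
    omega
  rcases h with h | ⟨x, y, hx, hy, hxy⟩ <;> rcases h' with h' | ⟨x', y', hx', hy', hxy'⟩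
  · exact pathArcs_out_unique hnd h h'
  · cases hxy'; exact absurd hx' (fun hx' => hlast h hx')
  · cases hxy; exact absurd hx (fun hx => hlast h' hx)
  · cases hxy; cases hxy'
    rw [hy] at hy'
    exact Option.some_inj.mp hy'

/-- Reachability along a path from its head. -/
lemma pathArcs_reach {l : List V} {r0 : V} (hhead : l.head? = some r0)
    {Rel : V → V → Prop} (hR : ∀ a b, (a, b) ∈ pathArcs l → Rel a b)
    {v : V} (hv : v ∈ l) : Relation.ReflTransGen Rel r0 v := by
  obtain ⟨k, hk, hkv⟩ := List.getElem_of_mem hv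
  subst hkv
  clear hv
  induction k with
  | zero =>
    rw [List.head?_eq_getElem?, List.getElem?_eq_getElem hk] at hhead
    rw [← Option.some_inj.mp hhead]
  | succ k' ih =>
    exact (ih (by omega)).tail (hR _ _ (pathArcs_arc hk))

/-- Reachability around a cycle: every member reaches every member. -/
lemma cycleArcs_reach {l : List V} (hne : l ≠ [])
    {Rel : V → V → Prop} (hR : ∀ a b, (a, b) ∈ cycleArcs l → Rel a b)
    {u v : V} (hu : u ∈ l) (hv : v ∈ l) : Relation.ReflTransGen Rel u v := by
  have hlen : 0 < l.length := List.length_pos_iff.mpr hne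
  have key : ∀ (j k : ℕ) (hk : k < l.length) (w : V),
      l[(k + j) % l.length]? = some w → Relation.ReflTransGen Rel l[k] w := by
    intro j
    induction j with
    | zero =>
      intro k hk w hw
      rw [Nat.add_zero, Nat.mod_eq_of_lt hk, List.getElem?_eq_getElem hk] at hw
      rw [← Option.some_inj.mp hw]
    | succ j ih =>
      intro k hk w hw
      set i := (k + j) % l.length with hi
      have hil : i < l.length := Nat.mod_lt _ hlen
      have hstep : Relation.ReflTransGen Rel l[k] l[i] :=
        ih k hk l[i] (by rw [← hi, List.getElem?_eq_getElem hil])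
      have hmod : (i + 1) % l.length = (k + (j + 1)) % l.length := by
        rw [hi, Nat.mod_add_mod, ← Nat.add_assoc]
      rw [← hmod] at hw
      refine hstep.tail ?_
      rcases Nat.lt_or_ge (i + 1) l.length with hi1 | hi1
      · rw [Nat.mod_eq_of_lt hi1, List.getElem?_eq_getElem hi1] at hw
        rw [← Option.some_inj.mp hw]
        exact hR _ _ (Or.inl (pathArcs_arc hi1))
      · have hieq : i + 1 = l.length := by omega
        rw [hieq, Nat.mod_self, List.getElem?_eq_getElem hlen] at hw
        refine hR _ _ (Or.inr ⟨l[i], w, ?_, ?_, rfl⟩)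
        · rw [List.getLast?_eq_getElem?, show l.length - 1 = i from by omega]
          exact List.getElem?_eq_getElem hil
        · rw [List.head?_eq_getElem?, List.getElem?_eq_getElem hlen]
          exact hw
  obtain ⟨a, ha, hav⟩ := List.getElem_of_mem hu
  obtain ⟨b, hb, hbv⟩ := List.getElem_of_mem hv
  have h := key (b + l.length - a) a ha v
    (by rw [show a + (b + l.length - a) = b + l.length from by omega, Nat.add_mod_right,
          Nat.mod_eq_of_lt hb, List.getElem?_eq_getElem hb, hbv])
  exact hav ▸ h

end ListLemmas
section CactusLemmas

variable {V : Type*}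

lemma IsCactus.root_mem {W : Set V} {F : Set (V × V)} {r0 : V}
    (hc : IsCactus W F r0) : r0 ∈ W := by
  induction hc with
  | trunk r l hnd hhead => exact List.mem_of_mem_head? (by rw [hhead]; rfl)
  | bud r W E l w u hc hnd hne hdisj hw hu ih => exact Or.inl ih

lemma IsCactus.arcs_mem {W : Set V} {F : Set (V × V)} {r0 : V}
    (hc : IsCactus W F r0) : ∀ a ∈ F, a.1 ∈ W ∧ a.2 ∈ W := by
  induction hc with
  | trunk r l hnd hhead =>
    intro a ha
    exact ⟨pathArcs_mem_left ha, pathArcs_mem_right ha⟩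
  | bud r W E l w u hc hnd hne hdisj hw hu ih =>
    rintro ⟨a, b⟩ ((ha | ha) | ha)
    · exact ⟨Or.inl (ih _ ha).1, Or.inl (ih _ ha).2⟩
    · rcases ha with ha | ⟨x, y, hx, hy, hxy⟩
      · exact ⟨Or.inr (pathArcs_mem_left ha), Or.inr (pathArcs_mem_right ha)⟩
      · cases hxy
        exact ⟨Or.inr (List.mem_of_getLast? hx), Or.inr (List.mem_of_mem_head?
          (by rw [hy]; rfl))⟩
    · cases ha
      exact ⟨Or.inl hw, Or.inr hu⟩

lemma IsCactus.reach {W : Set V} {F : Set (V × V)} {r0 : V}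
    (hc : IsCactus W F r0) : ∀ v ∈ W, Relation.ReflTransGen (fun a b => (a, b) ∈ F) r0 v := by
  induction hc with
  | trunk r l hnd hhead =>
    intro v hv
    exact pathArcs_reach hhead (fun a b h => h) hv
  | bud r W E l w u hc hnd hne hdisj hw hu ih =>
    have mono : ∀ x y, Relation.ReflTransGen (fun a b => (a, b) ∈ E) x y →
        Relation.ReflTransGen
          (fun a b => (a, b) ∈ E ∪ cycleArcs l ∪ {(w, u)}) x y := fun x y h =>
      Relation.ReflTransGen.mono (fun a b hab => Or.inl (Or.inl hab)) _ _ h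
    intro v hv
    rcases hv with hv | hv
    · exact mono _ _ (ih v hv)
    · refine Relation.ReflTransGen.trans ((mono _ _ (ih w hw)).tail (Or.inr rfl)) ?_
      exact cycleArcs_reach hne (fun a b h => Or.inl (Or.inr h)) hu hv

lemma IsCactus.choice {W : Set V} {F : Set (V × V)} {r0 : V}
    (hc : IsCactus W F r0) : ∃ S : Set (V × V), S ⊆ F ∧
      (∀ v ∈ W, v ≠ r0 → ∃ u, (u, v) ∈ S) ∧
      (∀ u v v', (u, v) ∈ S → (u, v') ∈ S → v = v') := by
  induction hc with
  | trunk r l hnd hhead =>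
    refine ⟨pathArcs l, le_refl _, ?_, fun u v v' h h' => pathArcs_out_unique hnd h h'⟩
    intro v hv hvr
    exact pathArcs_in hv (by rw [hhead]; exact fun h => hvr (Option.some_inj.mp h).symm)
  | bud r W E l w u hc hnd hne hdisj hw hu ih =>
    obtain ⟨S, hSF, hSin, hSout⟩ := ih
    refine ⟨S ∪ cycleArcs l, ?_, ?_, ?_⟩
    · rintro a (ha | ha)
      · exact Or.inl (Or.inl (hSF ha))
      · exact Or.inl (Or.inr ha)
    · rintro v (hv | hv) hvr
      · obtain ⟨x, hx⟩ := hSin v hv hvr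
        exact ⟨x, Or.inl hx⟩
      · obtain ⟨x, _, hx⟩ := cycleArcs_in hne hv
        exact ⟨x, Or.inr hx⟩
    · rintro x v v' (h | h) (h' | h')
      · exact hSout _ _ _ h h'
      · exact absurd ((hc.arcs_mem _ (hSF h)).1) (hdisj _ (cycleArcs_mem_left h'))
      · exact absurd ((hc.arcs_mem _ (hSF h')).1) (hdisj _ (cycleArcs_mem_left h))
      · exact cycleArcs_out_unique hnd h h'

end CactusLemmas
section Backward

variable {n m : ℕ} (r : Fin m → Fin (n + m))
  (t : {v : Fin (n + m) // ¬ ∃ j : Fin m, r j = v} → Fin (n + m))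

/-- The successor map of the chosen subgraph. -/
noncomputable def sfun (u : Fin (n + m)) : Option (Fin (n + m)) :=
  @dite _ (∃ v : {v : Fin (n + m) // ¬ ∃ j : Fin m, r j = v}, t v = u) (Classical.dec _)
    (fun h => some h.choose.1) (fun _ => none)

lemma sfun_spec {u w : Fin (n + m)} (h : sfun r t u = some w) :
    ∃ hw : ¬ ∃ j : Fin m, r j = w, t ⟨w, hw⟩ = u := by
  rw [sfun] at h
  split at h
  · rename_i hex
    have h2 : hex.choose.1 = w := Option.some_inj.mp h
    refine ⟨h2 ▸ hex.choose.2, ?_⟩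
    have h3 : (⟨w, h2 ▸ hex.choose.2⟩ : {v : Fin (n + m) // ¬ ∃ j : Fin m, r j = v}) =
        hex.choose := Subtype.ext h2.symm
    rw [h3]
    exact hex.choose_spec
  · exact absurd h (by simp)

lemma sfun_of_t (ht : Function.Injective t)
    (v : {v : Fin (n + m) // ¬ ∃ j : Fin m, r j = v}) : sfun r t (t v) = some v.1 := by
  rw [sfun]
  split
  · rename_i hex
    have := hex.choose_spec
    rw [Option.some_inj]
    exact congrArg Subtype.val (ht this)
  · rename_i hex
    exact absurd ⟨v, rfl⟩ hex

lemma sfun_inj {u u' w : Fin (n + m)} (h : sfun r t u = some w) (h' : sfun r t u' = some w) :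
    u = u' := by
  obtain ⟨hw, hw1⟩ := sfun_spec r t h
  obtain ⟨hw', hw1'⟩ := sfun_spec r t h'
  rw [← hw1, ← hw1']

lemma sfun_arc {E : Set (Fin (n + m) × Fin (n + m))} (htE : ∀ v, (t v, v.1) ∈ E)
    {u w : Fin (n + m)} (h : sfun r t u = some w) : (u, w) ∈ E := by
  obtain ⟨hw, hw1⟩ := sfun_spec r t h
  have := htE ⟨w, hw⟩
  rwa [hw1] at this

/-- Iterated successor chain from root `j`. -/
noncomputable def chain (j : Fin m) : ℕ → Option (Fin (n + m))
  | 0 => some (r j)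
  | k + 1 => (chain j k).bind (sfun r t)

lemma chain_down {j : Fin m} {k : ℕ} {w : Fin (n + m)} (h : chain r t j (k + 1) = some w) :
    ∃ x, chain r t j k = some x ∧ sfun r t x = some w := by
  rw [chain] at h
  cases hc : chain r t j k with
  | none => rw [hc] at h; exact absurd h (by simp)
  | some x => rw [hc] at h; exact ⟨x, rfl, h⟩

lemma sfun_ne_root {u : Fin (n + m)} {j : Fin m} : sfun r t u ≠ some (r j) := by
  intro h
  obtain ⟨hw, _⟩ := sfun_spec r t h
  exact hw ⟨j, rfl⟩

lemma chain_eq (hr : Function.Injective r) :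
    ∀ {a b : ℕ} {j j' : Fin m} {v : Fin (n + m)},
      chain r t j a = some v → chain r t j' b = some v → j = j' ∧ a = b := by
  intro a
  induction a with
  | zero =>
    intro b j j' v h h'
    cases b with
    | zero =>
      rw [chain] at h h'
      refine ⟨hr ?_, rfl⟩
      rw [Option.some_inj.mp h, Option.some_inj.mp h']
    | succ b =>
      obtain ⟨x, _, hx⟩ := chain_down r t h'
      rw [chain, Option.some_inj] at h
      exact absurd (h ▸ hx) (sfun_ne_root r t)
  | succ a ih =>
    intro b j j' v h h'
    cases b with
    | zero =>
      obtain ⟨x, _, hx⟩ := chain_down r t h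
      rw [chain, Option.some_inj] at h'
      exact absurd (h' ▸ hx) (sfun_ne_root r t)
    | succ b =>
      obtain ⟨x, hcx, hx⟩ := chain_down r t h
      obtain ⟨x', hcx', hx'⟩ := chain_down r t h'
      obtain rfl : x = x' := sfun_inj r t hx hx'
      obtain ⟨h1, h2⟩ := ih hcx hcx'
      exact ⟨h1, by rw [h2]⟩

lemma chain_none_exists (hr : Function.Injective r) (j : Fin m) :
    ∃ k, chain r t j k = none := by
  by_contra hno
  push_neg at hno
  have hs : ∀ k, (chain r t j k).isSome := fun k => Option.ne_none_iff_isSome.mp (hno k)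
  have hinj : ∀ a b : ℕ, (chain r t j a).get (hs a) = (chain r t j b).get (hs b) → a = b := by
    intro a b hab
    have ha : chain r t j a = some ((chain r t j a).get (hs a)) := (Option.some_get (hs a)).symm
    have hb : chain r t j b = some ((chain r t j b).get (hs b)) := (Option.some_get (hs b)).symm
    rw [hab] at ha
    exact (chain_eq r t hr ha hb).2
  obtain ⟨a, b, hne, h⟩ := Finite.exists_ne_map_eq_of_infinite (fun k => (chain r t j k).get (hs k))
  exact hne (hinj a b h)

/-- Length of the trunk from root `j`. -/
noncomputable def Nlen (j : Fin m) : ℕ := sInf {k | chain r t j k = none}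

lemma chain_Nlen (hr : Function.Injective r) (j : Fin m) : chain r t j (Nlen r t j) = none :=
  Nat.sInf_mem (chain_none_exists r t hr j)

lemma chain_lt_Nlen {j : Fin m} {k : ℕ} (hk : k < Nlen r t j) : chain r t j k ≠ none :=
  Nat.notMem_of_lt_sInf hk

lemma Nlen_pos (hr : Function.Injective r) (j : Fin m) : 0 < Nlen r t j := by
  rw [Nat.pos_iff_ne_zero]
  intro h0
  rcases Nat.sInf_eq_zero.mp h0 with h | h
  · have hc : chain r t j 0 = none := h
    simp only [chain] at hc
    exact absurd hc (by simp)
  · obtain ⟨k, hk⟩ := chain_none_exists r t hr j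
    exact Set.notMem_empty k (h ▸ hk)

lemma chain_ge_none (hr : Function.Injective r) {j : Fin m} {k : ℕ} (hk : Nlen r t j ≤ k) :
    chain r t j k = none := by
  obtain ⟨d, rfl⟩ := Nat.exists_eq_add_of_le hk
  clear hk
  induction d with
  | zero => exact chain_Nlen r t hr j
  | succ d ih =>
    rw [show Nlen r t j + (d + 1) = (Nlen r t j + d) + 1 from rfl, chain, ih]
    rfl

noncomputable def tval (j : Fin m) (k : ℕ) : Fin (n + m) := (chain r t j k).getD (r j)

lemma chain_tval {j : Fin m} {k : ℕ} (hk : k < Nlen r t j) :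
    chain r t j k = some (tval r t j k) := by
  have h := chain_lt_Nlen r t hk
  cases hc : chain r t j k with
  | none => exact absurd hc h
  | some x => rw [tval, hc]; rfl

/-- The trunk of root `j` as a list. -/
noncomputable def trunkList (j : Fin m) : List (Fin (n + m)) :=
  (List.range (Nlen r t j)).map (tval r t j)

lemma trunkList_length (j : Fin m) : (trunkList r t j).length = Nlen r t j := by
  rw [trunkList, List.length_map, List.length_range]

lemma trunkList_getElem? {j : Fin m} {k : ℕ} (hk : k < Nlen r t j) :
    (trunkList r t j)[k]? = some (tval r t j k) := by
  rw [trunkList, List.getElem?_map, List.getElem?_range hk]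
  rfl

lemma mem_trunkList (hr : Function.Injective r) {j : Fin m} {v : Fin (n + m)} :
    v ∈ trunkList r t j ↔ ∃ k, chain r t j k = some v := by
  constructor
  · intro hv
    rw [trunkList, List.mem_map] at hv
    obtain ⟨k, hk, hkv⟩ := hv
    rw [List.mem_range] at hk
    exact ⟨k, by rw [chain_tval r t hk, hkv]⟩
  · rintro ⟨k, hk⟩
    have hklt : k < Nlen r t j := by
      by_contra hc
      rw [chain_ge_none r t hr (by omega)] at hk
      exact absurd hk (by simp)
    rw [trunkList, List.mem_map]
    refine ⟨k, List.mem_range.mpr hklt, ?_⟩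
    rw [chain_tval r t hklt, Option.some_inj] at hk
    exact hk

lemma trunkList_nodup (hr : Function.Injective r) (j : Fin m) : (trunkList r t j).Nodup := by
  rw [trunkList]
  refine List.Nodup.map_on ?_ (List.nodup_range)
  intro x hx y hy hxy
  rw [List.mem_range] at hx hy
  exact (chain_eq r t hr (chain_tval r t hx) (hxy ▸ chain_tval r t hy)).2

lemma trunkList_head (hr : Function.Injective r) (j : Fin m) :
    (trunkList r t j).head? = some (r j) := by
  rw [List.head?_eq_getElem?, trunkList_getElem? r t (Nlen_pos r t hr j), tval, chain]
  rfl

lemma trunkList_arcs {j : Fin m} {a b : Fin (n + m)}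
    (h : (a, b) ∈ pathArcs (trunkList r t j)) : sfun r t a = some b := by
  obtain ⟨k, h1, h2⟩ := h
  have hk1 : k + 1 < Nlen r t j := by
    by_contra hc
    have hn : (trunkList r t j)[k+1]? = none :=
      List.getElem?_eq_none (by rw [trunkList_length]; omega)
    rw [hn] at h2
    exact absurd h2 (by simp)
  rw [trunkList_getElem? r t (by omega : k < Nlen r t j), Option.some_inj] at h1
  rw [trunkList_getElem? r t hk1, Option.some_inj] at h2
  have h1' : tval r t j k = a := h1
  have h2' : tval r t j (k + 1) = b := h2
  have hthis := chain_tval r t hk1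
  rw [chain, chain_tval r t (by omega : k < Nlen r t j)] at hthis
  have hthis' : sfun r t (tval r t j k) = some (tval r t j (k + 1)) := hthis
  rw [h1', h2'] at hthis'
  exact hthis'

/-- The set of trunk vertices. -/
def Tset : Set (Fin (n + m)) := {v | ∃ j k, chain r t j k = some v}

lemma root_mem_Tset (j : Fin m) : r j ∈ Tset r t := ⟨j, 0, rfl⟩

lemma Tset_closed {v w : Fin (n + m)} (hv : v ∈ Tset r t) (hw : sfun r t v = some w) :
    w ∈ Tset r t := by
  obtain ⟨j, k, hk⟩ := hv
  exact ⟨j, k + 1, by rw [chain, hk]; exact hw⟩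

lemma nonroot_of_not_Tset {v : Fin (n + m)} (hv : v ∉ Tset r t) : ¬ ∃ j : Fin m, r j = v := by
  rintro ⟨j, rfl⟩
  exact hv (root_mem_Tset r t j)

lemma t_not_Tset (ht : Function.Injective t) {v : Fin (n + m)} (hv : v ∉ Tset r t) :
    t ⟨v, nonroot_of_not_Tset r t hv⟩ ∉ Tset r t := by
  intro hT
  exact hv (Tset_closed r t hT (sfun_of_t r t ht _))

lemma sfun_surj_off_Tset (ht : Function.Injective t) {v : Fin (n + m)} (hv : v ∉ Tset r t) :
    ∃ w, w ∉ Tset r t ∧ sfun r t v = some w := by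
  set C : Set (Fin (n + m)) := {x | x ∉ Tset r t} with hC
  have hp : ∀ x : ↥C, t ⟨x.1, nonroot_of_not_Tset r t x.2⟩ ∈ C :=
    fun x => t_not_Tset r t ht x.2
  set p : ↥C → ↥C := fun x => ⟨t ⟨x.1, nonroot_of_not_Tset r t x.2⟩, hp x⟩ with hpdef
  have hinj : Function.Injective p := by
    intro x y hxy
    have h1 : t ⟨x.1, nonroot_of_not_Tset r t x.2⟩ = t ⟨y.1, nonroot_of_not_Tset r t y.2⟩ :=
      congrArg Subtype.val hxy
    have h2 := congrArg Subtype.val (ht h1)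
    exact Subtype.ext h2
  obtain ⟨x, hx⟩ := (Finite.injective_iff_surjective.mp hinj) ⟨v, hv⟩
  have hx1 : t ⟨x.1, nonroot_of_not_Tset r t x.2⟩ = v := congrArg Subtype.val hx
  refine ⟨x.1, x.2, ?_⟩
  rw [← hx1]
  exact sfun_of_t r t ht _

/-- Total version of the successor map. -/
noncomputable def sig (v : Fin (n + m)) : Fin (n + m) := (sfun r t v).getD v

lemma sig_spec (ht : Function.Injective t) {v : Fin (n + m)} (hv : v ∉ Tset r t) :
    sfun r t v = some (sig r t v) ∧ sig r t v ∉ Tset r t := by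
  obtain ⟨w, hw1, hw2⟩ := sfun_surj_off_Tset r t ht hv
  rw [sig, hw2]
  exact ⟨rfl, hw1⟩

lemma sig_arc {E : Set (Fin (n + m) × Fin (n + m))} (ht : Function.Injective t)
    (htE : ∀ v, (t v, v.1) ∈ E) {v : Fin (n + m)} (hv : v ∉ Tset r t) :
    (v, sig r t v) ∈ E :=
  sfun_arc r t htE (sig_spec r t ht hv).1

lemma sig_iter_not_Tset (ht : Function.Injective t) {v : Fin (n + m)} (hv : v ∉ Tset r t)
    (k : ℕ) : (sig r t)^[k] v ∉ Tset r t := by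
  induction k with
  | zero => exact hv
  | succ k ih =>
    rw [Function.iterate_succ_apply']
    exact (sig_spec r t ht ih).2

lemma sig_iter_inj (ht : Function.Injective t) {v v' : Fin (n + m)} (hv : v ∉ Tset r t)
    (hv' : v' ∉ Tset r t) {k : ℕ} (h : (sig r t)^[k] v = (sig r t)^[k] v') : v = v' := by
  induction k with
  | zero => exact h
  | succ k ih =>
    rw [Function.iterate_succ_apply', Function.iterate_succ_apply'] at h
    refine ih ?_
    have h1 := (sig_spec r t ht (sig_iter_not_Tset r t ht hv k)).1
    have h2 := (sig_spec r t ht (sig_iter_not_Tset r t ht hv' k)).1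
    rw [h] at h1
    exact sfun_inj r t h1 h2

lemma sig_period (ht : Function.Injective t) {v : Fin (n + m)} (hv : v ∉ Tset r t) :
    ∃ k, 0 < k ∧ (sig r t)^[k] v = v := by
  obtain ⟨a, b, hne, hab'⟩ := Finite.exists_ne_map_eq_of_infinite (fun k => (sig r t)^[k] v)
  have hab : (sig r t)^[a] v = (sig r t)^[b] v := hab'
  rcases Nat.lt_or_ge a b with h | h
  · refine ⟨b - a, by omega, ?_⟩
    refine sig_iter_inj r t ht (sig_iter_not_Tset r t ht hv _) hv (k := a) ?_
    rw [← Function.iterate_add_apply, show a + (b - a) = b from by omega]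
    exact hab.symm
  · have h' : b < a := by omega
    refine ⟨a - b, by omega, ?_⟩
    refine sig_iter_inj r t ht (sig_iter_not_Tset r t ht hv _) hv (k := b) ?_
    rw [← Function.iterate_add_apply, show b + (a - b) = a from by omega]
    exact hab

/-- Minimal period of an off-trunk vertex. -/
noncomputable def dper (v : Fin (n + m)) : ℕ := sInf {k | 0 < k ∧ (sig r t)^[k] v = v}

lemma dper_mem (ht : Function.Injective t) {v : Fin (n + m)} (hv : v ∉ Tset r t) :
    0 < dper r t v ∧ (sig r t)^[dper r t v] v = v :=
  Nat.sInf_mem (sig_period r t ht hv)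

lemma sig_iter_mod (ht : Function.Injective t) {v : Fin (n + m)} (hv : v ∉ Tset r t) (k : ℕ) :
    (sig r t)^[k] v = (sig r t)^[k % dper r t v] v := by
  conv_lhs => rw [← Nat.mod_add_div k (dper r t v)]
  rw [Function.iterate_add_apply, Function.iterate_mul]
  rw [Function.iterate_fixed (dper_mem r t ht hv).2]

/-- The cycle through an off-trunk vertex, as a list. -/
noncomputable def cycList (v : Fin (n + m)) : List (Fin (n + m)) :=
  (List.range (dper r t v)).map (fun k => (sig r t)^[k] v)

lemma cycList_ne_nil (ht : Function.Injective t) {v : Fin (n + m)} (hv : v ∉ Tset r t) :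
    cycList r t v ≠ [] := by
  rw [cycList, ← List.length_pos_iff, List.length_map, List.length_range]
  exact (dper_mem r t ht hv).1

lemma cycList_nodup (ht : Function.Injective t) {v : Fin (n + m)} (hv : v ∉ Tset r t) :
    (cycList r t v).Nodup := by
  rw [cycList]
  refine List.Nodup.map_on ?_ (List.nodup_range)
  intro x hx y hy hxy
  rw [List.mem_range] at hx hy
  by_contra hne
  rcases Nat.lt_or_ge x y with h | h
  · have : (sig r t)^[y - x] v = v := by
      refine sig_iter_inj r t ht (sig_iter_not_Tset r t ht hv _) hv (k := x) ?_
      rw [← Function.iterate_add_apply, show x + (y - x) = y from by omega]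
      exact hxy.symm
    exact Nat.notMem_of_lt_sInf (show y - x < dper r t v from by omega) ⟨by omega, this⟩
  · have h' : y < x := by omega
    have : (sig r t)^[x - y] v = v := by
      refine sig_iter_inj r t ht (sig_iter_not_Tset r t ht hv _) hv (k := y) ?_
      rw [← Function.iterate_add_apply, show y + (x - y) = x from by omega]
      exact hxy
    exact Nat.notMem_of_lt_sInf (show x - y < dper r t v from by omega) ⟨by omega, this⟩

lemma mem_cycList (ht : Function.Injective t) {v : Fin (n + m)} (hv : v ∉ Tset r t)
    {w : Fin (n + m)} : w ∈ cycList r t v ↔ ∃ k, (sig r t)^[k] v = w := by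
  rw [cycList, List.mem_map]
  constructor
  · rintro ⟨k, _, hk⟩
    exact ⟨k, hk⟩
  · rintro ⟨k, hk⟩
    refine ⟨k % dper r t v, List.mem_range.mpr (Nat.mod_lt _ (dper_mem r t ht hv).1), ?_⟩
    rw [← sig_iter_mod r t ht hv]
    exact hk

lemma self_mem_cycList (ht : Function.Injective t) {v : Fin (n + m)} (hv : v ∉ Tset r t) :
    v ∈ cycList r t v :=
  (mem_cycList r t ht hv).mpr ⟨0, rfl⟩

lemma cycList_arcs (ht : Function.Injective t) {v : Fin (n + m)} (hv : v ∉ Tset r t)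
    {a b : Fin (n + m)} (h : (a, b) ∈ cycleArcs (cycList r t v)) :
    a ∉ Tset r t ∧ b = sig r t a := by
  have hlen : (cycList r t v).length = dper r t v := by
    rw [cycList, List.length_map, List.length_range]
  have hget : ∀ {k : ℕ}, k < dper r t v → (cycList r t v)[k]? = some ((sig r t)^[k] v) := by
    intro k hk
    rw [cycList, List.getElem?_map, List.getElem?_range hk]
    rfl
  rcases h with h | ⟨x, y, hx, hy, hxy⟩
  · obtain ⟨k, h1, h2⟩ := h
    have hk1 : k + 1 < dper r t v := by
      by_contra hc
      have hn : (cycList r t v)[k+1]? = none :=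
        List.getElem?_eq_none (by rw [hlen]; omega)
      rw [hn] at h2
      exact absurd h2 (by simp)
    rw [hget (by omega)] at h1
    rw [hget hk1] at h2
    obtain rfl := Option.some_inj.mp h1
    obtain rfl := Option.some_inj.mp h2
    exact ⟨sig_iter_not_Tset r t ht hv k, (Function.iterate_succ_apply' _ _ _)⟩
  · cases hxy
    have hd := (dper_mem r t ht hv).1
    rw [List.getLast?_eq_getElem?, hlen] at hx
    rw [hget (by omega : dper r t v - 1 < dper r t v)] at hx
    rw [List.head?_eq_getElem?, hget hd] at hy
    obtain rfl := Option.some_inj.mp hx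
    obtain rfl := Option.some_inj.mp hy
    refine ⟨sig_iter_not_Tset r t ht hv _, ?_⟩
    have h5 : sig r t ((sig r t)^[dper r t v - 1] v) = v := by
      rw [← Function.iterate_succ_apply' (sig r t) (dper r t v - 1) v,
        show (dper r t v - 1).succ = dper r t v from by omega, (dper_mem r t ht hv).2]
    rw [Function.iterate_zero_apply, h5]

end Backward
lemma crossing_arc {α : Type*} {Rel : α → α → Prop} {U : Set α} {x y : α}
    (h : Relation.ReflTransGen Rel x y) (hx : x ∈ U) :
    y ∉ U → ∃ a b, a ∈ U ∧ b ∉ U ∧ Rel a b := by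
  induction h with
  | refl => exact fun hy => absurd hx hy
  | @tail b c hp hrel ih =>
    intro hy
    by_cases hb : b ∈ U
    · exact ⟨b, c, hb, hy, hrel⟩
    · exact ih hb

section Extend

variable {n m : ℕ} {r : Fin m → Fin (n + m)}
  {t : {v : Fin (n + m) // ¬ ∃ j : Fin m, r j = v} → Fin (n + m)}
  {E : Set (Fin (n + m) × Fin (n + m))}

lemma extend_cacti (hr : Function.Injective r) (ht : Function.Injective t)
    (htE : ∀ v, (t v, v.1) ∈ E)
    (hforest : ∀ v : Fin (n + m), (¬ ∃ j : Fin m, r j = v) →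
      ∃ j : Fin m, Relation.ReflTransGen (fun a b => (a, b) ∈ E) (r j) v)
    (k : ℕ) :
    ∀ (U : Set (Fin (n + m))) (W : Fin m → Set (Fin (n + m)))
      (F : Fin m → Set (Fin (n + m) × Fin (n + m))),
      Uᶜ.ncard ≤ k → (∀ v ∈ Tset r t, v ∈ U) →
      (∀ v ∈ U, v ∉ Tset r t → sig r t v ∈ U) →
      (∀ j, IsCactus (W j) (F j) (r j)) → (∀ j, F j ⊆ E) →
      (Pairwise fun j j' => Disjoint (W j) (W j')) → (⋃ j, W j) = U →
      ∃ (W' : Fin m → Set (Fin (n + m))) (F' : Fin m → Set (Fin (n + m) × Fin (n + m))),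
        (∀ j, IsCactus (W' j) (F' j) (r j)) ∧ (∀ j, F' j ⊆ E) ∧
        (Pairwise fun j j' => Disjoint (W' j) (W' j')) ∧ (⋃ j, W' j) = Set.univ := by
  induction k with
  | zero =>
    intro U W F hcard hT hcl hcact hFE hdisj hcover
    have hU : U = Set.univ := by
      have h1 : Uᶜ = ∅ := (Set.ncard_eq_zero (Set.toFinite _)).mp (Nat.le_zero.mp hcard)
      rwa [Set.compl_empty_iff] at h1
    exact ⟨W, F, hcact, hFE, hdisj, by rw [hcover, hU]⟩
  | succ k ih =>
    intro U W F hcard hT hcl hcact hFE hdisj hcover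
    by_cases hU : U = Set.univ
    · exact ⟨W, F, hcact, hFE, hdisj, by rw [hcover, hU]⟩
    -- pick a vertex outside U, find a crossing arc
    obtain ⟨v0, hv0⟩ := Set.ne_univ_iff_exists_notMem U |>.mp hU
    have hv0T : v0 ∉ Tset r t := fun h => hv0 (hT _ h)
    obtain ⟨j0, hpath⟩ := hforest v0 (nonroot_of_not_Tset r t hv0T)
    obtain ⟨w, u, hwU, huU, hwuE⟩ :=
      crossing_arc hpath (hT _ (root_mem_Tset r t j0)) hv0
    have huT : u ∉ Tset r t := fun h => huU (hT _ h)
    set l := cycList r t u with hl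
    set O : Set (Fin (n + m)) := {x | x ∈ l} with hO
    -- iterates of elements of U stay in U
    have hiter : ∀ x ∈ U, x ∉ Tset r t → ∀ a : ℕ, (sig r t)^[a] x ∈ U := by
      intro x hx hxT a
      induction a with
      | zero => exact hx
      | succ a iha =>
        rw [Function.iterate_succ_apply']
        exact hcl _ iha (sig_iter_not_Tset r t ht hxT a)
    -- the cycle of u is disjoint from U
    have hOU : ∀ x ∈ O, x ∉ U := by
      intro x hxl hxU
      obtain ⟨kk, hkk⟩ := (mem_cycList r t ht huT).mp hxl
      have hxT : x ∉ Tset r t := hkk ▸ sig_iter_not_Tset r t ht huT kk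
      set d := dper r t u with hd
      have hdpos : 0 < d := (dper_mem r t ht huT).1
      have hmd : d * (kk / d) + kk % d = kk := Nat.div_add_mod kk d
      have hkmd : kk % d < d := Nat.mod_lt _ hdpos
      set a := d * (kk / d) + d - kk with ha
      have hak : a + kk = d * (kk / d + 1) := by rw [Nat.mul_succ]; omega
      have huu : (sig r t)^[a] x = u := by
        rw [← hkk, ← Function.iterate_add_apply, hak, Function.iterate_mul]
        exact Function.iterate_fixed (dper_mem r t ht huT).2 _
      exact huU (huu ▸ hiter x hxU hxT a)
    -- locate w
    obtain ⟨j1, hj1⟩ : ∃ j1, w ∈ W j1 := Set.mem_iUnion.mp (hcover ▸ hwU)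
    have hWsubU : ∀ j, W j ⊆ U := fun j x hx => hcover ▸ Set.mem_iUnion.mpr ⟨j, hx⟩
    -- new data
    set W' := Function.update W j1 (W j1 ∪ O) with hW'
    set F' := Function.update F j1 (F j1 ∪ cycleArcs l ∪ {(w, u)}) with hF'
    have hWj1 : W' j1 = W j1 ∪ O := Function.update_self _ _ _
    have hFj1 : F' j1 = F j1 ∪ cycleArcs l ∪ {(w, u)} := Function.update_self _ _ _
    have hWne : ∀ j, j ≠ j1 → W' j = W j := fun j hj => Function.update_of_ne hj _ _
    have hFne : ∀ j, j ≠ j1 → F' j = F j := fun j hj => Function.update_of_ne hj _ _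
    refine ih (U ∪ O) W' F' ?_ ?_ ?_ ?_ ?_ ?_ ?_
    · -- cardinality decreases
      have hssub : (U ∪ O)ᶜ ⊂ Uᶜ := by
        constructor
        · rw [Set.compl_subset_compl]
          exact Set.subset_union_left
        · rw [Set.not_subset]
          refine ⟨u, huU, ?_⟩
          intro hc
          exact hc (Or.inr (self_mem_cycList r t ht huT))
      have := Set.ncard_lt_ncard hssub (Set.toFinite _)
      omega
    · exact fun v hv => Or.inl (hT v hv)
    · rintro v (hv | hv) hvT
      · exact Or.inl (hcl v hv hvT)
      · obtain ⟨kk, hkk⟩ := (mem_cycList r t ht huT).mp hv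
        refine Or.inr ((mem_cycList r t ht huT).mpr ⟨kk + 1, ?_⟩)
        rw [Function.iterate_succ_apply', hkk]
    · intro j
      by_cases hj : j = j1
      · subst hj
        rw [hWj1, hFj1]
        exact IsCactus.bud (r j) (W j) (F j) l w u (hcact j) (cycList_nodup r t ht huT)
          (cycList_ne_nil r t ht huT) (fun x hx hxW => hOU x hx (hWsubU j hxW)) hj1
          (self_mem_cycList r t ht huT)
      · rw [hWne j hj, hFne j hj]
        exact hcact j
    · intro j
      by_cases hj : j = j1
      · subst hj
        rw [hFj1]
        rintro a ((ha | ha) | ha)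
        · exact hFE _ ha
        · obtain ⟨h1, h2⟩ := cycList_arcs r t ht huT (a := a.1) (b := a.2) ha
          have := sig_arc r t ht htE h1
          rw [← h2] at this
          exact this
        · cases ha
          exact hwuE
      · rw [hFne j hj]
        exact hFE j
    · intro j j' hjj
      by_cases hj : j = j1
      · subst hj
        rw [hWj1, hWne j' (Ne.symm hjj)]
        rw [Set.disjoint_union_left]
        exact ⟨hdisj hjj, Set.disjoint_left.mpr fun x hx hx' => hOU x hx (hWsubU j' hx')⟩
      · by_cases hj' : j' = j1
        · subst hj'
          rw [hWj1, hWne j hj]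
          rw [Set.disjoint_union_right]
          exact ⟨hdisj hjj, Set.disjoint_right.mpr fun x hx hx' => hOU x hx (hWsubU j hx')⟩
        · rw [hWne j hj, hWne j' hj']
          exact hdisj hjj
    · ext x
      simp only [Set.mem_iUnion, Set.mem_union]
      constructor
      · rintro ⟨j, hj⟩
        by_cases hjeq : j = j1
        · subst hjeq
          rw [hWj1] at hj
          rcases hj with hj | hj
          · exact Or.inl (hcover ▸ Set.mem_iUnion.mpr ⟨j, hj⟩)
          · exact Or.inr hj
        · rw [hWne j hjeq] at hj
          exact Or.inl (hcover ▸ Set.mem_iUnion.mpr ⟨j, hj⟩)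
      · rintro (hx | hx)
        · obtain ⟨j, hj⟩ := Set.mem_iUnion.mp (hcover ▸ hx)
          by_cases hjeq : j = j1
          · subst hjeq
            exact ⟨j, by rw [hWj1]; exact Or.inl hj⟩
          · exact ⟨j, by rw [hWne j hjeq]; exact hj⟩
        · exact ⟨j1, by rw [hWj1]; exact Or.inr hx⟩

lemma backward_cacti (hr : Function.Injective r) (ht : Function.Injective t)
    (htE : ∀ v, (t v, v.1) ∈ E)
    (hforest : ∀ v : Fin (n + m), (¬ ∃ j : Fin m, r j = v) →
      ∃ j : Fin m, Relation.ReflTransGen (fun a b => (a, b) ∈ E) (r j) v) :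
    ∃ (W : Fin m → Set (Fin (n + m))) (F : Fin m → Set (Fin (n + m) × Fin (n + m))),
      (∀ j, IsCactus (W j) (F j) (r j)) ∧ (∀ j, F j ⊆ E) ∧
      (Pairwise fun j j' => Disjoint (W j) (W j')) ∧ (⋃ j, W j) = Set.univ := by
  refine extend_cacti hr ht htE hforest ((Tset r t)ᶜ.ncard) (Tset r t)
    (fun j => {v | v ∈ trunkList r t j}) (fun j => pathArcs (trunkList r t j))
    le_rfl (fun v hv => hv) (fun v hv hv' => absurd hv hv') ?_ ?_ ?_ ?_
  · intro j
    exact IsCactus.trunk (r j) (trunkList r t j) (trunkList_nodup r t hr j)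
      (trunkList_head r t hr j)
  · intro j a ha
    have h1 : sfun r t a.1 = some a.2 := trunkList_arcs r t ha
    exact sfun_arc r t htE h1
  · intro j j' hjj
    rw [Set.disjoint_left]
    intro x hx hx'
    obtain ⟨kk, hkk⟩ := (mem_trunkList r t hr).mp hx
    obtain ⟨kk', hkk'⟩ := (mem_trunkList r t hr).mp hx'
    exact hjj (chain_eq r t hr hkk hkk').1
  · ext x
    simp only [Set.mem_iUnion, Set.mem_setOf_eq]
    constructor
    · rintro ⟨j, hj⟩
      obtain ⟨kk, hkk⟩ := (mem_trunkList r t hr).mp hj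
      exact ⟨j, kk, hkk⟩
    · rintro ⟨j, kk, hkk⟩
      exact ⟨j, (mem_trunkList r t hr).mpr ⟨kk, hkk⟩⟩

end Extend

/-- A directed graph on `n + m` vertices has a spanning subgraph which
is a disjoint union of `m` cactus graphs rooted at the `m` distinct vertices `r 0, …,
r (m-1)` iff it has a spanning forest rooted at these vertices and a spanning subgraph
which is a disjoint union of `m` directed path graphs and a non-negative number of
directed cycle graphs whose path sources are exactly these vertices (encoded by the choice
`t v` of the unique incoming arc of each vertex `v` outside the roots, with `t` injective
so that no two chosen arcs share a start vertex). -/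
theorem stmt12 (n m : ℕ) (hn : 1 ≤ n) (hm : 1 ≤ m)
    (E : Set (Fin (n + m) × Fin (n + m))) (r : Fin m → Fin (n + m))
    (hr : Function.Injective r) :
    (∃ (W : Fin m → Set (Fin (n + m))) (F : Fin m → Set (Fin (n + m) × Fin (n + m))),
        (∀ j, IsCactus (W j) (F j) (r j)) ∧ (∀ j, F j ⊆ E) ∧
        Pairwise (fun j j' => Disjoint (W j) (W j')) ∧ (⋃ j, W j) = Set.univ) ↔
      ((∀ v : Fin (n + m), (¬ ∃ j : Fin m, r j = v) →
          ∃ j : Fin m, Relation.ReflTransGen (fun a b => (a, b) ∈ E) (r j) v) ∧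
        ∃ t : {v : Fin (n + m) // ¬ ∃ j : Fin m, r j = v} → Fin (n + m),
          Function.Injective t ∧ ∀ v, (t v, v.1) ∈ E) := by
  constructor
  · rintro ⟨W, F, hcact, hFE, hdisj, hcover⟩
    constructor
    · intro v hv
      have hvU : v ∈ ⋃ j, W j := by rw [hcover]; trivial
      obtain ⟨j, hj⟩ := Set.mem_iUnion.mp hvU
      exact ⟨j, Relation.ReflTransGen.mono (fun a b hab => hFE j hab) _ _ ((hcact j).reach v hj)⟩
    · choose S hSF hSin hSout using fun j => (hcact j).choice
      have hmem : ∀ v : {v : Fin (n + m) // ¬ ∃ j : Fin m, r j = v}, ∃ j, v.1 ∈ W j := by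
        intro v
        have : v.1 ∈ ⋃ j, W j := by rw [hcover]; trivial
        exact Set.mem_iUnion.mp this
      choose jv hjv using hmem
      have harc : ∀ v : {v : Fin (n + m) // ¬ ∃ j : Fin m, r j = v},
          ∃ u, (u, v.1) ∈ S (jv v) :=
        fun v => hSin (jv v) v.1 (hjv v) (fun h => v.2 ⟨jv v, h.symm⟩)
      choose t htS using harc
      refine ⟨t, ?_, fun v => hFE _ (hSF _ (htS v))⟩
      intro v1 v2 h12
      have h1 : (t v1, v1.1) ∈ S (jv v1) := htS v1
      have h2 : (t v1, v2.1) ∈ S (jv v2) := h12 ▸ htS v2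
      have hj12 : jv v1 = jv v2 := by
        by_contra hne
        exact Set.disjoint_left.mp (hdisj hne)
          ((hcact (jv v1)).arcs_mem _ (hSF _ h1)).1
          ((hcact (jv v2)).arcs_mem _ (hSF _ h2)).1
      rw [← hj12] at h2
      exact Subtype.ext (hSout (jv v1) _ _ _ h1 h2)
  · rintro ⟨hforest, t, ht, htE⟩
    exact backward_cacti hr ht htE hforest


end StructCtrl
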